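/- Let C ≤ SL_3(R) be the group of positive diagonal matrices and let P_n be the matrix with rows (1, 0, n), (0, 1, n), (0, 0, 1). Then P_n C P_n^{-1} converges, as n → ∞, to the group N_3 = { matrices with rows (1, 0, t), (0, 1, s), (0, 0, 1) : s, t ∈ R }. -/

import Mathlib

open Filter Topology Matrix

/-- Convergence of a sequence of subsets (subgroups) of a topological space:
(a) every element of `L` is a limit of a sequence with `n`-th term in `H n`;
(b) every subsequential limit of such sequences lies in `L`. -/
def SubgroupConverges {M : Type*} [TopologicalSpace M]
    (H : ℕ → Set M) (L : Set M) : Prop :=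
  (∀ l ∈ L, ∃ h : ℕ → M, (∀ n, h n ∈ H n) ∧ Tendsto h atTop (𝓝 l)) ∧
  (∀ h : ℕ → M, (∀ n, h n ∈ H n) → ∀ φ : ℕ → ℕ, StrictMono φ → ∀ l : M,
    Tendsto (h ∘ φ) atTop (𝓝 l) → l ∈ L)

/-- The positive diagonal Cartan subgroup of SL₃(ℝ), as a set of matrices. -/
def CartanC : Set (Matrix (Fin 3) (Fin 3) ℝ) :=
  {M | ∃ a b : ℝ, 0 < a ∧ 0 < b ∧ M = Matrix.diagonal ![a, b, 1 / (a * b)]}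

noncomputable def P3 (n : ℕ) : Matrix (Fin 3) (Fin 3) ℝ :=
  !![1, 0, (n : ℝ); 0, 1, (n : ℝ); 0, 0, 1]

def groupN3 : Set (Matrix (Fin 3) (Fin 3) ℝ) :=
  {M | ∃ s t : ℝ, M = !![1, 0, t; 0, 1, s; 0, 0, 1]}

lemma P3_inv (n : ℕ) : (P3 n)⁻¹ = !![1, 0, -(n:ℝ); 0, 1, -(n:ℝ); 0, 0, 1] := by
  apply Matrix.inv_eq_right_inv
  simp [P3, Matrix.mul_fin_three, Matrix.one_fin_three]

lemma diag3 (a b c : ℝ) : Matrix.diagonal ![a, b, c] = !![a,0,0;0,b,0;0,0,c] := by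
  ext i j; fin_cases i <;> fin_cases j <;>
    simp [Matrix.diagonal, Matrix.vecHead, Matrix.vecTail]

lemma conj3 (n : ℕ) (a b c : ℝ) :
    P3 n * !![a,0,0;0,b,0;0,0,c] * !![1, 0, -(n:ℝ); 0, 1, -(n:ℝ); 0, 0, 1] =
    !![a, 0, (n:ℝ)*(c-a); 0, b, (n:ℝ)*(c-b); 0, 0, c] := by
  simp [P3, Matrix.mul_fin_three]
  ring_nf
  simp

lemma explim (w : ℝ) : Tendsto (fun n : ℕ => (n:ℝ) * (Real.exp (w / n) - 1)) atTop (𝓝 w) := by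
  have hd : HasDerivAt (fun x : ℝ => Real.exp (w * x)) w 0 := by
    simpa [Function.comp_def] using (Real.hasDerivAt_exp (w * 0)).comp 0 ((hasDerivAt_id 0).const_mul w)
  have h1 := hasDerivAt_iff_tendsto_slope.1 hd
  have h2 : Tendsto (fun n : ℕ => 1 / (n:ℝ)) atTop (𝓝[≠] 0) := by
    apply tendsto_nhdsWithin_of_tendsto_nhds_of_eventually_within
    · exact tendsto_one_div_atTop_nhds_zero_nat
    · filter_upwards [eventually_ge_atTop 1] with n hn
      simp only [Set.mem_compl_iff, Set.mem_singleton_iff]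
      positivity
  apply (h1.comp h2).congr'
  filter_upwards [eventually_ge_atTop 1] with n hn
  have hn' : (n:ℝ) ≠ 0 := by positivity
  simp only [Function.comp_apply, slope_def_field, div_sub_div_same,
    mul_zero, Real.exp_zero, sub_zero, div_eq_mul_inv]
  field_simp

lemma expdiff (w₁ w₂ : ℝ) :
    Tendsto (fun n : ℕ => (n:ℝ) * (Real.exp (w₁ / n) - Real.exp (w₂ / n))) atTop
      (𝓝 (w₁ - w₂)) := by
  have := (explim w₁).sub (explim w₂)
  apply this.congr
  intro n; ring

lemma exptend (w : ℝ) : Tendsto (fun n : ℕ => Real.exp (w / n)) atTop (𝓝 1) := by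
  have h : Tendsto (fun n : ℕ => w / n) atTop (𝓝 0) := tendsto_const_div_atTop_nhds_zero_nat w
  simpa [Function.comp_def] using (Real.continuous_exp.tendsto 0).comp h

lemma cube_eq_one {x : ℝ} (h : x * x * x = 1) : x = 1 := by
  nlinarith [sq_nonneg (x - 1), sq_nonneg (x + 1), sq_nonneg x]

/-- `P_n C P_n⁻¹` converges to the group `N₃`. -/
theorem cartan_conj_converges_to_N3 :
    SubgroupConverges
      (fun n => (fun M => P3 n * M * (P3 n)⁻¹) '' CartanC) groupN3 := by
  constructor
  · -- part (a)
    rintro l ⟨s, t, rfl⟩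
    set u : ℝ := (s - 2*t)/3 with hu
    set v : ℝ := (t - 2*s)/3 with hv
    refine ⟨fun n => !![Real.exp (u/n), 0, (n:ℝ)*(Real.exp (-(u+v)/n) - Real.exp (u/n));
        0, Real.exp (v/n), (n:ℝ)*(Real.exp (-(u+v)/n) - Real.exp (v/n));
        0, 0, Real.exp (-(u+v)/n)], fun n => ?_, ?_⟩
    · refine ⟨Matrix.diagonal ![Real.exp (u/n), Real.exp (v/n),
        1/(Real.exp (u/n) * Real.exp (v/n))],
        ⟨_, _, Real.exp_pos _, Real.exp_pos _, rfl⟩, ?_⟩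
      have hc : 1/(Real.exp (u/n) * Real.exp (v/n)) = Real.exp (-(u+v)/n) := by
        rw [← Real.exp_add, one_div, ← Real.exp_neg]
        congr 1; ring
      simp only [diag3, P3_inv, hc]
      exact conj3 n _ _ _
    · rw [show (!![1, 0, t; 0, 1, s; 0, 0, 1] : Matrix (Fin 3) (Fin 3) ℝ) =
        !![1, 0, (-(u+v)) - u; 0, 1, (-(u+v)) - v; 0, 0, 1] by
          congr 1 <;> simp [hu, hv] <;> ring <;> simp]
      refine tendsto_pi_nhds.2 fun i => tendsto_pi_nhds.2 fun j => ?_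
      fin_cases i <;> fin_cases j <;>
        simp only [Matrix.cons_val', Matrix.cons_val_zero, Matrix.cons_val_one,
          Matrix.head_cons, Matrix.head_fin_const, Matrix.empty_val',
          Matrix.cons_val_fin_one, Fin.mk_zero, Fin.mk_one, Fin.isValue]
      · exact exptend u
      · exact tendsto_const_nhds
      · exact expdiff (-(u+v)) u
      · exact tendsto_const_nhds
      · exact exptend v
      · exact expdiff (-(u+v)) v
      · exact tendsto_const_nhds
      · exact tendsto_const_nhds
      · simpa using exptend (-(u+v))
  · -- part (b)
    intro h hmem φ hφ l hl
    have hform : ∀ n, ∃ a b : ℝ, 0 < a ∧ 0 < b ∧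
        h n = !![a, 0, (n:ℝ)*(1/(a*b) - a); 0, b, (n:ℝ)*(1/(a*b) - b); 0, 0, 1/(a*b)] := by
      intro n
      obtain ⟨M, ⟨a, b, ha, hb, rfl⟩, hMe⟩ := hmem n
      refine ⟨a, b, ha, hb, ?_⟩
      rw [← hMe]
      simp only [diag3, P3_inv]
      exact conj3 n a b _
    choose a b ha hb heq using hform
    have key : ∀ i j : Fin 3, Tendsto (fun n => h (φ n) i j) atTop (𝓝 (l i j)) := by
      intro i j
      exact ((((continuous_apply j).comp (continuous_apply i)).tendsto l).comp hl)
    have hab : ∀ n, a n * b n ≠ 0 := fun n => by have h1 := ha n; have h2 := hb n; positivity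
    have hA : Tendsto (fun n => a (φ n)) atTop (𝓝 (l 0 0)) :=
      (key 0 0).congr fun n => by rw [heq]; simp
    have hB : Tendsto (fun n => b (φ n)) atTop (𝓝 (l 1 1)) :=
      (key 1 1).congr fun n => by rw [heq]; simp
    have hC : Tendsto (fun n => 1/(a (φ n) * b (φ n))) atTop (𝓝 (l 2 2)) :=
      (key 2 2).congr fun n => by rw [heq]; simp
    have hT : Tendsto (fun n => (φ n : ℝ) * (1/(a (φ n) * b (φ n)) - a (φ n))) atTop
        (𝓝 (l 0 2)) :=
      (key 0 2).congr fun n => by rw [heq]; simp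
    have hS : Tendsto (fun n => (φ n : ℝ) * (1/(a (φ n) * b (φ n)) - b (φ n))) atTop
        (𝓝 (l 1 2)) :=
      (key 1 2).congr fun n => by rw [heq]; simp
    have hzero : ∀ (i j : Fin 3), (∀ n, h (φ n) i j = 0) → l i j = 0 := fun i j hz =>
      tendsto_nhds_unique ((key i j).congr hz) tendsto_const_nhds
    have h01 : l 0 1 = 0 := hzero 0 1 fun n => by
      rw [heq]; simp [Matrix.vecHead, Matrix.vecTail]
    have h10 : l 1 0 = 0 := hzero 1 0 fun n => by
      rw [heq]; simp [Matrix.vecHead, Matrix.vecTail]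
    have h20 : l 2 0 = 0 := hzero 2 0 fun n => by
      rw [heq]; simp [Matrix.vecHead, Matrix.vecTail]
    have h21 : l 2 1 = 0 := hzero 2 1 fun n => by
      rw [heq]; simp [Matrix.vecHead, Matrix.vecTail]
    have hinv : Tendsto (fun n => 1 / (φ n : ℝ)) atTop (𝓝 0) :=
      tendsto_one_div_atTop_nhds_zero_nat.comp hφ.tendsto_atTop
    have hdiff : ∀ (f : ℕ → ℝ) (c : ℝ),
        Tendsto (fun n => (φ n : ℝ) * f n) atTop (𝓝 c) →
        Tendsto f atTop (𝓝 0) := by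
      intro f c hf
      have := hf.mul hinv
      rw [mul_zero] at this
      apply this.congr'
      filter_upwards [eventually_ge_atTop 1] with n hn
      have : (1:ℕ) ≤ φ n := le_trans hn (hφ.le_apply)
      have hne : (φ n : ℝ) ≠ 0 := by positivity
      field_simp
    have hCA : l 2 2 - l 0 0 = 0 :=
      tendsto_nhds_unique (hC.sub hA) (hdiff _ _ hT)
    have hCB : l 2 2 - l 1 1 = 0 :=
      tendsto_nhds_unique (hC.sub hB) (hdiff _ _ hS)
    have hprod : l 0 0 * l 1 1 * l 2 2 = 1 := by
      refine tendsto_nhds_unique ((hA.mul hB).mul hC) ?_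
      have : ∀ n, a (φ n) * b (φ n) * (1/(a (φ n) * b (φ n))) = 1 := fun n =>
        mul_one_div_cancel (hab (φ n))
      exact Tendsto.congr (fun n => (this n).symm) tendsto_const_nhds
    have h22 : l 2 2 = 1 := by
      apply cube_eq_one
      have e1 : l 0 0 = l 2 2 := by linarith
      have e2 : l 1 1 = l 2 2 := by linarith
      rw [e1, e2] at hprod; exact hprod
    have h00 : l 0 0 = 1 := by linarith
    have h11 : l 1 1 = 1 := by linarith
    refine ⟨l 1 2, l 0 2, ?_⟩
    ext i j
    fin_cases i <;> fin_cases j <;>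
      simp [h00, h01, h10, h11, h20, h21, h22, Matrix.vecHead, Matrix.vecTail]
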